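/- For d > 2 there exists C so that for all L ≥ 2: ∫_{[−(L+½)π,(L+½)π]^d} |k|² · ∏_{j=1}^d (1 ∨ |k_j|)^{−3} / (1 ∧ |k|²)² dk ≤ C log L. -/

import Mathlib

open scoped BigOperators
open MeasureTheory

lemma even_intInt {f : ℝ → ℝ} (hf : ∀ x, f (-x) = f x) (a b : ℝ) :
    ∫ x in (-b)..(-a), f x = ∫ x in a..b, f x := by
  rw [← intervalIntegral.integral_comp_neg]
  simp_rw [hf]

lemma q_cont : Continuous (fun t : ℝ => ((max 1 |t|) ^ 3)⁻¹) := by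
  apply Continuous.inv₀ ((continuous_const.max continuous_abs).pow 3)
  intro t
  have : (0:ℝ) < max 1 |t| := lt_max_iff.2 (Or.inl one_pos)
  exact pow_ne_zero _ this.ne'

lemma intB {M : ℝ} (hM : 1 ≤ M) :
    ∫ t in Set.Icc (-M) M, ((max 1 |t|) ^ 3)⁻¹ ≤ 3 := by
  have hM0 : -M ≤ M := by linarith
  have hII : ∀ a b : ℝ, IntervalIntegrable (fun t : ℝ => ((max 1 |t|) ^ 3)⁻¹) volume a b :=
    fun a b => q_cont.intervalIntegrable a b
  rw [MeasureTheory.integral_Icc_eq_integral_Ioc, ← intervalIntegral.integral_of_le hM0]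
  have e1 : (∫ t in (1:ℝ)..M, ((max 1 |t|) ^ 3)⁻¹) = (1 - M ^ (-2:ℤ)) / 2 := by
    have : (∫ t in (1:ℝ)..M, ((max 1 |t|) ^ 3)⁻¹) = ∫ t in (1:ℝ)..M, t ^ (-3:ℤ) := by
      apply intervalIntegral.integral_congr
      intro t ht
      rw [Set.uIcc_of_le hM, Set.mem_Icc] at ht
      have h1t : (1:ℝ) ≤ t := ht.1
      show ((max 1 |t|) ^ 3)⁻¹ = t ^ (-3:ℤ)
      rw [zpow_neg, max_eq_right (by rw [abs_of_nonneg (by linarith)]; exact h1t),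
        abs_of_nonneg (by linarith)]
      norm_num
    rw [this, integral_zpow (Or.inr ⟨by decide, by
      rw [Set.uIcc_of_le hM]; intro h; exact absurd (Set.mem_Icc.mp h).1 (by norm_num)⟩)]
    norm_num
    ring
  have e2 : (∫ t in (-M)..(-1:ℝ), ((max 1 |t|) ^ 3)⁻¹) = (1 - M ^ (-2:ℤ)) / 2 := by
    rw [even_intInt (fun t => by rw [abs_neg]) 1 M, e1]
  have e3 : (∫ t in (-1:ℝ)..1, ((max 1 |t|) ^ 3)⁻¹) = 2 := by
    have : (∫ t in (-1:ℝ)..1, ((max 1 |t|) ^ 3)⁻¹) = ∫ _ in (-1:ℝ)..1, (1:ℝ) := by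
      apply intervalIntegral.integral_congr
      intro t ht
      rw [Set.uIcc_of_le (by norm_num), Set.mem_Icc] at ht
      show ((max 1 |t|) ^ 3)⁻¹ = 1
      rw [max_eq_left (abs_le.mpr ht)]
      norm_num
    rw [this]
    norm_num
  rw [← intervalIntegral.integral_add_adjacent_intervals (hII (-M) (-1)) (hII (-1) M),
    ← intervalIntegral.integral_add_adjacent_intervals (hII (-1) 1) (hII 1 M), e1, e2, e3]
  have : (0:ℝ) < M ^ (-2:ℤ) := by positivity
  linarith

lemma intC {M : ℝ} (hM : 1 ≤ M) :
    ∫ t in Set.Icc (-M) M, t ^ 2 * ((max 1 |t|) ^ 3)⁻¹ ≤ 1 + 2 * Real.log M := by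
  have hM0 : -M ≤ M := by linarith
  have hc : Continuous (fun t : ℝ => t ^ 2 * ((max 1 |t|) ^ 3)⁻¹) :=
    (continuous_pow 2).mul q_cont
  have hII : ∀ a b : ℝ, IntervalIntegrable (fun t : ℝ => t ^ 2 * ((max 1 |t|) ^ 3)⁻¹) volume a b :=
    fun a b => hc.intervalIntegrable a b
  rw [MeasureTheory.integral_Icc_eq_integral_Ioc, ← intervalIntegral.integral_of_le hM0]
  have e1 : (∫ t in (1:ℝ)..M, t ^ 2 * ((max 1 |t|) ^ 3)⁻¹) = Real.log M := by
    have : (∫ t in (1:ℝ)..M, t ^ 2 * ((max 1 |t|) ^ 3)⁻¹) = ∫ t in (1:ℝ)..M, t⁻¹ := by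
      apply intervalIntegral.integral_congr
      intro t ht
      rw [Set.uIcc_of_le hM, Set.mem_Icc] at ht
      have h1t : (1:ℝ) ≤ t := ht.1
      have ht0 : (0:ℝ) < t := by linarith
      show t ^ 2 * ((max 1 |t|) ^ 3)⁻¹ = t⁻¹
      rw [max_eq_right (by rw [abs_of_pos ht0]; exact h1t), abs_of_pos ht0]
      field_simp
    rw [this, integral_inv (by
      rw [Set.uIcc_of_le hM]; intro h; exact absurd (Set.mem_Icc.mp h).1 (by norm_num))]
    rw [div_one]
  have e2 : (∫ t in (-M)..(-1:ℝ), t ^ 2 * ((max 1 |t|) ^ 3)⁻¹) = Real.log M := by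
    rw [even_intInt (fun t => by rw [abs_neg]; ring) 1 M, e1]
  have e3 : (∫ t in (-1:ℝ)..1, t ^ 2 * ((max 1 |t|) ^ 3)⁻¹) ≤ 1 := by
    have : (∫ t in (-1:ℝ)..1, t ^ 2 * ((max 1 |t|) ^ 3)⁻¹) = ∫ t in (-1:ℝ)..1, t ^ 2 := by
      apply intervalIntegral.integral_congr
      intro t ht
      rw [Set.uIcc_of_le (by norm_num), Set.mem_Icc] at ht
      show t ^ 2 * ((max 1 |t|) ^ 3)⁻¹ = t ^ 2
      rw [max_eq_left (abs_le.mpr ht)]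
      norm_num
    rw [this, integral_pow]
    norm_num
  rw [← intervalIntegral.integral_add_adjacent_intervals (hII (-M) (-1)) (hII (-1) M),
    ← intervalIntegral.integral_add_adjacent_intervals (hII (-1) 1) (hII 1 M), e1, e2]
  have := Real.log_nonneg hM
  linarith

lemma even_intInt' {f : ℝ → ℝ} (hf : ∀ x, f (-x) = f x) (a b : ℝ) :
    ∫ x in (-b)..(-a), f x = ∫ x in a..b, f x := by
  rw [← intervalIntegral.integral_comp_neg]; simp_rw [hf]

lemma intA_ii {e : ℝ} (he : 0 < e) (he1 : e < 1) :
    IntervalIntegrable (fun t : ℝ => |t| ^ (-e)) volume (-1) 1 := by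
  have h01 : IntervalIntegrable (fun t : ℝ => |t| ^ (-e)) volume 0 1 := by
    rw [intervalIntegrable_iff]
    apply ((intervalIntegrable_iff.mp (intervalIntegral.intervalIntegrable_rpow'
      (a := 0) (b := 1) (by linarith : (-1:ℝ) < -e)))).congr_fun ?_ measurableSet_uIoc
    intro t ht
    rw [Set.uIoc_of_le (by norm_num : (0:ℝ) ≤ 1), Set.mem_Ioc] at ht
    show t ^ (-e) = |t| ^ (-e)
    rw [abs_of_pos ht.1]
  have hneg : IntervalIntegrable (fun t : ℝ => |t| ^ (-e)) volume (-1) 0 := by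
    have := (IntervalIntegrable.iff_comp_neg (by simp)).mp h01.symm
    simp only [abs_neg, neg_zero] at this
    exact this
  exact hneg.trans h01

lemma intA {e : ℝ} (he : 0 < e) (he1 : e < 1) :
    IntegrableOn (fun t : ℝ => |t| ^ (-e)) (Set.Icc (-1:ℝ) 1) ∧
    (∫ t in Set.Icc (-1:ℝ) 1, |t| ^ (-e)) = 2 / (1 - e) := by
  have hII := intA_ii he he1
  constructor
  · rw [integrableOn_Icc_iff_integrableOn_Ioc]
    have := intervalIntegrable_iff.mp hII
    rwa [Set.uIoc_of_le (by norm_num : (-1:ℝ) ≤ 1)] at this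
  · have e01 : (∫ t in (0:ℝ)..1, |t| ^ (-e)) = 1 / (1 - e) := by
      have : (∫ t in (0:ℝ)..1, |t| ^ (-e)) = ∫ t in (0:ℝ)..1, t ^ (-e) := by
        apply intervalIntegral.integral_congr
        intro t ht
        rw [Set.uIcc_of_le (by norm_num : (0:ℝ) ≤ 1), Set.mem_Icc] at ht
        show |t| ^ (-e) = t ^ (-e)
        rw [abs_of_nonneg ht.1]
      rw [this, integral_rpow (Or.inl (by linarith))]
      rw [Real.one_rpow, Real.zero_rpow (by linarith)]
      ring_nf
    have eneg : (∫ t in (-1:ℝ)..0, |t| ^ (-e)) = 1 / (1 - e) := by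
      have h := even_intInt' (f := fun t : ℝ => |t| ^ (-e)) (fun t => by show |(-t)| ^ (-e) = |t| ^ (-e); rw [abs_neg]) 0 1
      rw [neg_zero] at h
      rw [h, e01]
    rw [MeasureTheory.integral_Icc_eq_integral_Ioc,
      ← intervalIntegral.integral_of_le (by norm_num : (-1:ℝ) ≤ 1),
      ← intervalIntegral.integral_add_adjacent_intervals (hII.mono_set ?_) (hII.mono_set ?_),
      e01, eneg]
    · ring
    · rw [Set.uIcc_of_le (by norm_num : (-1:ℝ) ≤ (0:ℝ)), Set.uIcc_of_le (by norm_num : (-1:ℝ) ≤ 1)]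
      exact Set.Icc_subset_Icc le_rfl (by norm_num)
    · rw [Set.uIcc_of_le (by norm_num : (0:ℝ) ≤ 1), Set.uIcc_of_le (by norm_num : (-1:ℝ) ≤ 1)]
      exact Set.Icc_subset_Icc (by norm_num) le_rfl

lemma aux_M_le (x : ℝ) (hx : 2 ≤ x) : (x + 1/2) * Real.pi ≤ x ^ 4 := by
  have hp : (x+1/2) * Real.pi ≤ (x+1/2) * 4 :=
    mul_le_mul_of_nonneg_left Real.pi_le_four (by linarith)
  nlinarith [sq_nonneg (x - 2), sq_nonneg (x^2 - 2), sq_nonneg x, sq_nonneg (x^2 - 2*x)]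

set_option maxHeartbeats 1000000 in
theorem integral_inside_box_log_bound (d : ℕ) (hd : 2 < d) :
    ∃ C : ℝ, ∀ L : ℕ, 2 ≤ L →
      (∫ k in (Set.univ.pi fun _ : Fin d =>
          Set.Icc (-(((L : ℝ) + 1 / 2) * Real.pi)) (((L : ℝ) + 1 / 2) * Real.pi)),
        (∑ j, (k j) ^ 2) * (∏ j, ((max 1 |k j|) ^ 3)⁻¹) /
          (min 1 (∑ j, (k j) ^ 2)) ^ 2) ≤ C * Real.log L := by
  have hd0 : (0:ℝ) < d := by exact_mod_cast Nat.zero_lt_of_lt hd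
  set e : ℝ := 2 / (d:ℝ) with he_def
  have he : 0 < e := by rw [he_def]; positivity
  have he1 : e < 1 := by rw [he_def, div_lt_one hd0]; exact_mod_cast hd
  have h1e : 0 < 1 - e := by linarith
  obtain ⟨huA, huI⟩ := intA he he1
  set u : ℝ → ℝ := (Set.Icc (-1:ℝ) 1).indicator (fun t => |t| ^ (-e)) with hu_def
  have hu_int : Integrable u := (integrable_indicator_iff measurableSet_Icc).2 huA
  have hu_nonneg : ∀ t, 0 ≤ u t := fun t => Set.indicator_nonneg (fun s _ => by positivity) t
  have huval : (∫ t, u t) = 2 / (1 - e) := by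
    rw [hu_def, integral_indicator measurableSet_Icc]; exact huI
  refine ⟨(2/(1-e)) ^ d / Real.log 2 + d * 3 ^ (d-1) * (1 / Real.log 2 + 8), ?_⟩
  intro L hL
  have hL2 : (2:ℝ) ≤ (L:ℝ) := by exact_mod_cast hL
  set M : ℝ := ((L:ℝ) + 1/2) * Real.pi with hM_def
  have hM1 : (1:ℝ) ≤ M := by nlinarith [Real.pi_gt_three]
  set q : ℝ → ℝ := fun t => ((max 1 |t|) ^ 3)⁻¹ with hq_def
  set r : ℝ → ℝ := fun t => t ^ 2 * ((max 1 |t|) ^ 3)⁻¹ with hr_def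
  set uq : ℝ → ℝ := (Set.Icc (-M) M).indicator q with huq_def
  set ur : ℝ → ℝ := (Set.Icc (-M) M).indicator r with hur_def
  have hq_nonneg : ∀ t, 0 ≤ q t := fun t => by
    rw [hq_def]
    have : (0:ℝ) < max 1 |t| := lt_max_iff.2 (Or.inl one_pos)
    positivity
  have hq_le_one : ∀ t, q t ≤ 1 := fun t => by
    rw [hq_def]
    have h : (1:ℝ) ≤ max 1 |t| := le_max_left _ _
    have h3 : (1:ℝ) ≤ (max 1 |t|) ^ 3 := one_le_pow₀ h
    exact inv_le_one_of_one_le₀ h3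
  have hr_nonneg : ∀ t, 0 ≤ r t := fun t => by
    rw [hr_def]
    have : (0:ℝ) < max 1 |t| := lt_max_iff.2 (Or.inl one_pos)
    positivity
  have huq_int : Integrable uq :=
    (integrable_indicator_iff measurableSet_Icc).2 (q_cont.integrableOn_Icc)
  have hur_int : Integrable ur :=
    (integrable_indicator_iff measurableSet_Icc).2 (((continuous_pow 2).mul q_cont).integrableOn_Icc)
  have huq_nonneg : ∀ t, 0 ≤ uq t := fun t => Set.indicator_nonneg (fun s _ => hq_nonneg s) t
  have hur_nonneg : ∀ t, 0 ≤ ur t := fun t => Set.indicator_nonneg (fun s _ => hr_nonneg s) t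
  have huq_val : (∫ t, uq t) ≤ 3 := by
    rw [huq_def, integral_indicator measurableSet_Icc, hq_def]; exact intB hM1
  have hur_val : (∫ t, ur t) ≤ 1 + 2 * Real.log M := by
    rw [hur_def, integral_indicator measurableSet_Icc, hr_def]; exact intC hM1
  have huq_iv_nonneg : 0 ≤ ∫ t, uq t := integral_nonneg huq_nonneg
  have hur_iv_nonneg : 0 ≤ ∫ t, ur t := integral_nonneg hur_nonneg
  set B := Set.univ.pi (fun _ : Fin d => Set.Icc (-M) M) with hB_def
  have hB_meas : MeasurableSet B := MeasurableSet.univ_pi fun _ => measurableSet_Icc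
  set G : (Fin d → ℝ) → ℝ := fun k => ∏ j, u (k j) with hG_def
  set H : (Fin d → ℝ) → ℝ := fun k => ∑ i, ∏ j, (if j = i then ur else uq) (k j) with hH_def
  have hHi : ∀ i : Fin d,
      Integrable (fun k : Fin d → ℝ => ∏ j, (if j = i then ur else uq) (k j)) :=
    fun i => Integrable.fintype_prod fun j => by
      by_cases h : j = i <;> simp [h, hur_int, huq_int]
  have hG_int : Integrable G := Integrable.fintype_prod fun _ => hu_int
  have hH_int : Integrable H := integrable_finset_sum _ fun i _ => hHi i
  have hG_nonneg : ∀ k, 0 ≤ G k := fun k => Finset.prod_nonneg fun j _ => hu_nonneg _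
  have hH_nonneg : ∀ k, 0 ≤ H k := fun k => Finset.sum_nonneg fun i _ =>
    Finset.prod_nonneg fun j _ => by by_cases h : j = i <;> simp [h, hur_nonneg _, huq_nonneg _]
  rw [← integral_indicator hB_meas]
  have key : (∫ k : Fin d → ℝ, B.indicator (fun k =>
        (∑ j, (k j) ^ 2) * (∏ j, ((max 1 |k j|) ^ 3)⁻¹) /
          (min 1 (∑ j, (k j) ^ 2)) ^ 2) k) ≤ ∫ k : Fin d → ℝ, (G k + H k) := by
    apply integral_mono_of_nonneg
    · filter_upwards with k
      apply Set.indicator_nonneg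
      intro x _
      have h1 : (0:ℝ) ≤ ∑ j, (x j) ^ 2 := Finset.sum_nonneg fun j _ => sq_nonneg _
      have h2 : (0:ℝ) ≤ ∏ j, ((max 1 |x j|) ^ 3)⁻¹ :=
        Finset.prod_nonneg fun j _ => by
          have : (0:ℝ) < max 1 |x j| := lt_max_iff.2 (Or.inl one_pos)
          positivity
      positivity
    · exact hG_int.add hH_int
    · have hae : ∀ᵐ k : Fin d → ℝ, ∀ j, k j ≠ (0:ℝ) := by
        rw [MeasureTheory.volume_pi]
        exact (MeasureTheory.ae_all_iff).2 fun j => MeasureTheory.Measure.ae_eval_ne _ j 0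
      filter_upwards [hae] with k hk
      by_cases hkB : k ∈ B
      case neg =>
        rw [Set.indicator_of_notMem hkB]
        exact add_nonneg (hG_nonneg k) (hH_nonneg k)
      rw [Set.indicator_of_mem hkB]
      show (∑ j, (k j) ^ 2) * (∏ j, ((max 1 |k j|) ^ 3)⁻¹) /
          (min 1 (∑ j, (k j) ^ 2)) ^ 2 ≤ G k + H k
      set S := ∑ j, (k j) ^ 2 with hS_def
      set P := ∏ j, ((max 1 |k j|) ^ 3)⁻¹ with hP_def
      have hi0 : (0:ℕ) < d := by omega
      have hS0 : 0 < S := by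
        rw [hS_def]
        apply Finset.sum_pos' (fun j _ => sq_nonneg _)
        refine ⟨⟨0, hi0⟩, Finset.mem_univ _, ?_⟩
        have := hk ⟨0, hi0⟩
        positivity
      have hP0 : 0 ≤ P := by
        rw [hP_def]
        apply Finset.prod_nonneg fun j _ => ?_
        have : (0:ℝ) < max 1 |k j| := lt_max_iff.2 (Or.inl one_pos)
        positivity
      have hP1 : P ≤ 1 := by
        rw [hP_def]
        apply Finset.prod_le_one (fun j _ => ?_) (fun j _ => hq_le_one (k j))
        have : (0:ℝ) < max 1 |k j| := lt_max_iff.2 (Or.inl one_pos)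
        positivity
      rcases le_total S 1 with hS1 | hS1
      · have hmin : min 1 S = S := min_eq_right hS1
        have hF : S * P / (min 1 S) ^ 2 ≤ S⁻¹ := by
          rw [hmin]
          calc S * P / S ^ 2 ≤ S * 1 / S ^ 2 := by gcongr
          _ = S⁻¹ := by field_simp
        have hGb : S⁻¹ ≤ G k := by
          have hcoord : ∀ j, k j ∈ Set.Icc (-1:ℝ) 1 := by
            intro j
            have h1 : (k j) ^ 2 ≤ S :=
              Finset.single_le_sum (f := fun j => (k j) ^ 2) (fun j _ => sq_nonneg _)
                (Finset.mem_univ j)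
            have h2 : |k j| ≤ 1 := by
              nlinarith [sq_abs (k j), abs_nonneg (k j)]
            exact Set.mem_Icc.mpr (abs_le.mp h2)
          have hGk : G k = ∏ j, |k j| ^ (-e) := by
            rw [hG_def]
            apply Finset.prod_congr rfl
            intro j _
            rw [hu_def, Set.indicator_of_mem (hcoord j)]
          rw [hGk]
          have hxe : ∀ j : Fin d, |k j| ^ e = ((k j) ^ 2) ^ ((d:ℝ)⁻¹) := by
            intro j
            rw [he_def, div_eq_mul_inv, Real.rpow_mul (abs_nonneg _), Real.rpow_two, sq_abs]
          have hprod_le : (∏ j, |k j| ^ e) ≤ S := by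
            calc (∏ j, |k j| ^ e) ≤ ∏ _j : Fin d, (S ^ ((d:ℝ)⁻¹)) := by
                  apply Finset.prod_le_prod (fun j _ => by positivity)
                  intro j _
                  rw [hxe j]
                  apply Real.rpow_le_rpow (sq_nonneg _) ?_ (by positivity)
                  exact Finset.single_le_sum (f := fun j => (k j) ^ 2)
                    (fun j _ => sq_nonneg _) (Finset.mem_univ j)
              _ = (S ^ ((d:ℝ)⁻¹)) ^ (d:ℕ) := by
                  rw [Finset.prod_const, Finset.card_univ, Fintype.card_fin]
              _ = S := by
                  rw [← Real.rpow_natCast (S ^ ((d:ℝ)⁻¹)) d, ← Real.rpow_mul hS0.le,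
                    inv_mul_cancel₀ hd0.ne', Real.rpow_one]
          have hpos : 0 < ∏ j, |k j| ^ e :=
            Finset.prod_pos fun j _ => Real.rpow_pos_of_pos (abs_pos.2 (hk j)) _
          have hprodinv : (∏ j, |k j| ^ (-e)) = (∏ j, |k j| ^ e)⁻¹ := by
            rw [← Finset.prod_inv_distrib]
            apply Finset.prod_congr rfl
            intro j _
            rw [Real.rpow_neg (abs_nonneg _)]
          rw [hprodinv]
          exact inv_anti₀ hpos hprod_le
        calc S * P / (min 1 S) ^ 2 ≤ S⁻¹ := hF
          _ ≤ G k := hGb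
          _ ≤ G k + H k := le_add_of_nonneg_right (hH_nonneg k)
      · have hmin : min 1 S = 1 := min_eq_left hS1
        have hFk : S * P / (min 1 S) ^ 2 = S * P := by rw [hmin]; norm_num
        have hcoord : ∀ j, k j ∈ Set.Icc (-M) M := fun j => hkB j (Set.mem_univ j)
        have hHk : H k = S * P := by
          have hterm : ∀ i : Fin d,
              (∏ j, (if j = i then ur else uq) (k j)) = (k i) ^ 2 * P := by
            intro i
            have step : ∀ j : Fin d,
                (if j = i then ur else uq) (k j) = (if j = i then r else q) (k j) := fun j => by
              by_cases h : j = i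
              · rw [if_pos h, if_pos h, hur_def, Set.indicator_of_mem (hcoord j)]
              · rw [if_neg h, if_neg h, huq_def, Set.indicator_of_mem (hcoord j)]
            rw [Finset.prod_congr rfl (fun j _ => step j),
              ← Finset.mul_prod_erase Finset.univ _ (Finset.mem_univ i)]
            have h2 : (∏ j ∈ Finset.univ.erase i, (if j = i then r else q) (k j))
                = ∏ j ∈ Finset.univ.erase i, q (k j) :=
              Finset.prod_congr rfl fun j hj => by rw [if_neg (Finset.ne_of_mem_erase hj)]
            rw [h2]
            simp only [eq_self_iff_true, if_true, hr_def, hq_def, hP_def]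
            rw [mul_assoc]
            congr 1
            exact Finset.mul_prod_erase Finset.univ
              (fun j => ((max 1 |k j|) ^ 3)⁻¹) (Finset.mem_univ i)
          show (∑ i, ∏ j, (if j = i then ur else uq) (k j)) = S * P
          rw [Finset.sum_congr rfl fun i _ => hterm i, ← Finset.sum_mul, ← hS_def]
        rw [hFk, ← hHk]
        exact le_add_of_nonneg_left (hG_nonneg k)
  refine le_trans key ?_
  rw [integral_add hG_int hH_int]
  have hGval : (∫ k : Fin d → ℝ, G k) = (2/(1-e)) ^ d := by
    simp only [hG_def]
    rw [MeasureTheory.volume_pi, MeasureTheory.integral_fintype_prod_eq_pow (ι := Fin d) u, huval, Fintype.card_fin]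
  have hHval : (∫ k : Fin d → ℝ, H k) ≤ (d:ℝ) * ((1 + 2*Real.log M) * 3 ^ (d-1)) := by
    simp only [hH_def]
    rw [integral_finset_sum _ fun i _ => hHi i]
    have hone : ∀ i : Fin d, (∫ k : Fin d → ℝ, ∏ j, (if j = i then ur else uq) (k j))
        ≤ (1 + 2*Real.log M) * 3 ^ (d-1) := by
      intro i
      rw [MeasureTheory.volume_pi, MeasureTheory.integral_fintype_prod_eq_prod (ι := Fin d) (fun j => if j = i then ur else uq),
        ← Finset.mul_prod_erase Finset.univ _ (Finset.mem_univ i)]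
      simp only [eq_self_iff_true, if_true]
      have h2 : (∏ j ∈ Finset.univ.erase i, ∫ t, (if j = i then ur else uq) t)
          = ∏ j ∈ Finset.univ.erase i, ∫ t, uq t :=
        Finset.prod_congr rfl fun j hj => by rw [if_neg (Finset.ne_of_mem_erase hj)]
      rw [h2, Finset.prod_const, Finset.card_erase_of_mem (Finset.mem_univ i),
        Finset.card_univ, Fintype.card_fin]
      have h3 : (∫ t, uq t) ^ (d-1) ≤ 3 ^ (d-1) := pow_le_pow_left₀ huq_iv_nonneg huq_val _
      have hlog : 0 ≤ Real.log M := Real.log_nonneg hM1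
      exact mul_le_mul hur_val h3 (pow_nonneg huq_iv_nonneg _) (by linarith)
    calc (∑ i : Fin d, ∫ k : Fin d → ℝ, ∏ j, (if j = i then ur else uq) (k j))
        ≤ ∑ _i : Fin d, ((1 + 2*Real.log M) * 3 ^ (d-1)) := Finset.sum_le_sum fun i _ => hone i
      _ = (d:ℝ) * ((1 + 2*Real.log M) * 3 ^ (d-1)) := by
          rw [Finset.sum_const, Finset.card_univ, Fintype.card_fin, nsmul_eq_mul]
  have hlog2 : 0 < Real.log 2 := Real.log_pos (by norm_num)
  have hlogL : Real.log 2 ≤ Real.log L := Real.log_le_log (by norm_num) hL2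
  have hlogL0 : 0 < Real.log L := lt_of_lt_of_le hlog2 hlogL
  have hM4 : M ≤ (L:ℝ)^4 := by
    rw [hM_def]; exact aux_M_le _ hL2
  have hlogM : Real.log M ≤ 4 * Real.log L := by
    calc Real.log M ≤ Real.log ((L:ℝ)^4) := Real.log_le_log (by linarith) hM4
      _ = 4 * Real.log L := by rw [Real.log_pow]; norm_num
  have hc1d : (0:ℝ) ≤ (2/(1-e))^d := by positivity
  have h1 : (2/(1-e))^d ≤ ((2/(1-e))^d / Real.log 2) * Real.log ↑L := by
    rw [div_mul_eq_mul_div, le_div_iff₀ hlog2]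
    exact mul_le_mul_of_nonneg_left hlogL hc1d
  have h2 : 1 + 2*Real.log M ≤ (1/Real.log 2 + 8) * Real.log ↑L := by
    have h21 : (1:ℝ) ≤ (1/Real.log 2) * Real.log ↑L := by
      rw [one_div, inv_mul_eq_div, le_div_iff₀ hlog2]
      linarith
    have hexp : (1/Real.log 2 + 8) * Real.log ↑L
        = (1/Real.log 2) * Real.log ↑L + 8 * Real.log ↑L := by ring
    rw [hexp]
    linarith
  have h3 : (d:ℝ) * ((1 + 2*Real.log M) * 3^(d-1))
      ≤ (d:ℝ) * 3^(d-1) * ((1/Real.log 2 + 8) * Real.log ↑L) := by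
    have hpos : (0:ℝ) ≤ (d:ℝ) * 3^(d-1) := by positivity
    calc (d:ℝ) * ((1 + 2*Real.log M) * 3^(d-1))
        = (d:ℝ)*3^(d-1) * (1+2*Real.log M) := by ring
      _ ≤ _ := mul_le_mul_of_nonneg_left h2 hpos
  calc (∫ k : Fin d → ℝ, G k) + ∫ k : Fin d → ℝ, H k
      ≤ (2/(1-e))^d + (d:ℝ)*((1+2*Real.log M)*3^(d-1)) := by
        rw [hGval]; linarith [hHval]
    _ ≤ ((2/(1-e))^d / Real.log 2) * Real.log L
        + (d:ℝ)*3^(d-1)*((1/Real.log 2 + 8)*Real.log L) := by linarith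
    _ = ((2/(1-e))^d / Real.log 2 + (d:ℝ)*3^(d-1)*(1/Real.log 2 + 8)) * Real.log L := by ring
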